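/- (Bounded martingale convergence/representation theorem.) Let (Ω, F, P) be a probability space, I a directed poset, and (F_i)_{i∈I} a filtration of sub-σ-algebras with σ(⋃_{i∈I} F_i) = F. Let r > 0 and let (X_i)_{i∈I} be a martingale with each X_i F_i-measurable and 0 ≤ X_i ≤ r P-a.e., i.e. E[X_j | F_i] = X_i P-a.e. for all i ≤ j. Then there exists a measurable X : Ω → [0,∞) with 0 ≤ X ≤ r P-a.e. such that E[X | F_i] = X_i P-a.e. for every i ∈ I, and X is unique up to P-a.e. equality. -/

import Mathlib

open MeasureTheory Filter Topology

/-- **Bounded martingale convergence/representation theorem.** For a filtration `(F_i)`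
over a directed poset generating `F` and a martingale `(X_i)` with each `X_i`
`F_i`-measurable and `0 ≤ X_i ≤ r` a.e., there is a measurable `X : Ω → [0,∞)` with
`0 ≤ X ≤ r` a.e. and `E[X | F_i] = X_i` a.e. for every `i`; moreover `X` is unique up
to `P`-a.e. equality. -/
theorem stmt15 {Ω I : Type*} [PartialOrder I] [IsDirected I (· ≤ ·)] [Nonempty I]
    {mΩ : MeasurableSpace Ω} (P : Measure Ω) [IsProbabilityMeasure P]
    (F : I → MeasurableSpace Ω) (hmono : Monotone F) (hle : ∀ i, F i ≤ mΩ)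
    (hgen : (⨆ i, F i) = mΩ)
    (r : ℝ) (hr : 0 < r) (X : I → Ω → ℝ)
    (hXmeas : ∀ i, Measurable[F i] (X i))
    (hX0 : ∀ i, 0 ≤ᵐ[P] X i) (hXr : ∀ i, X i ≤ᵐ[P] fun _ => r)
    (hmart : ∀ i j, i ≤ j → P[X j | F i] =ᵐ[P] X i) :
    ∃ Y : Ω → ℝ, Measurable Y ∧ 0 ≤ᵐ[P] Y ∧ (Y ≤ᵐ[P] fun _ => r) ∧
      (∀ i, P[Y | F i] =ᵐ[P] X i) ∧
      ∀ Y' : Ω → ℝ, Measurable Y' → 0 ≤ᵐ[P] Y' → (Y' ≤ᵐ[P] fun _ => r) →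
        (∀ i, P[Y' | F i] =ᵐ[P] X i) → Y' =ᵐ[P] Y := by
  classical
  haveI : Fact ((1 : ENNReal) ≤ 2) := ⟨one_le_two⟩
  haveI : NeBot (atTop : Filter I) := atTop_neBot_iff.mpr ⟨‹_›, ‹_›⟩
  have hXae : ∀ i, AEStronglyMeasurable (X i) P := fun i =>
    ((hXmeas i).mono (hle i) le_rfl).stronglyMeasurable.aestronglyMeasurable
  have hbound : ∀ i, ∀ᵐ ω ∂P, ‖X i ω‖ ≤ r := by
    intro i
    filter_upwards [hX0 i, hXr i] with ω h0 h1
    simp only [Pi.zero_apply] at h0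
    rw [Real.norm_eq_abs, abs_le]
    exact ⟨by linarith, h1⟩
  have hmem2 : ∀ i, MemLp (X i) 2 P := fun i => MemLp.of_bound (hXae i) r (hbound i)
  have hint : ∀ i, Integrable (X i) P := fun i => (hmem2 i).integrable one_le_two
  set f : I → Lp ℝ 2 P := fun i => (hmem2 i).toLp (X i) with hf
  have hcoe : ∀ i, f i =ᵐ[P] X i := fun i => (hmem2 i).coeFn_toLp
  -- inner products
  have hinner : ∀ i j, i ≤ j → (inner ℝ (f i) (f j) : ℝ) = (inner ℝ (f i) (f i) : ℝ) := by
    intro i j hij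
    have hmulij : Integrable (fun ω => X i ω * X j ω) P := by
      refine (L2.integrable_inner (𝕜 := ℝ) (f i) (f j)).congr ?_
      filter_upwards [hcoe i, hcoe j] with ω h1 h2
      simp [h1, h2, RCLike.inner_apply, mul_comm]
    have hpull : P[(fun ω => X i ω * X j ω) | F i]
        =ᵐ[P] fun ω => X i ω * (P[X j | F i]) ω :=
      condExp_mul_of_stronglyMeasurable_left (hXmeas i).stronglyMeasurable hmulij (hint j)
    have heq2 : (fun ω => X i ω * (P[X j | F i]) ω) =ᵐ[P] fun ω => X i ω * X i ω := by
      filter_upwards [hmart i j hij] with ω hω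
      rw [hω]
    have h1 : ∫ ω, X i ω * X j ω ∂P = ∫ ω, X i ω * X i ω ∂P := by
      rw [← integral_condExp (hle i) (f := fun ω => X i ω * X j ω)]
      exact integral_congr_ae (hpull.trans heq2)
    have h2 : (inner ℝ (f i) (f j) : ℝ) = ∫ ω, X i ω * X j ω ∂P := by
      rw [L2.inner_def]
      refine integral_congr_ae ?_
      filter_upwards [hcoe i, hcoe j] with ω e1 e2
      simp [e1, e2, RCLike.inner_apply, mul_comm]
    have h3 : (inner ℝ (f i) (f i) : ℝ) = ∫ ω, X i ω * X i ω ∂P := by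
      rw [L2.inner_def]
      refine integral_congr_ae ?_
      filter_upwards [hcoe i] with ω e1
      simp [e1, RCLike.inner_apply, sq]
    rw [h2, h3, h1]
  set N : I → ℝ := fun i => ‖f i‖ ^ 2 with hN
  have hdiff : ∀ i j, i ≤ j → ‖f j - f i‖ ^ 2 = N j - N i := by
    intro i j hij
    rw [norm_sub_sq_real, real_inner_comm, hinner i j hij, real_inner_self_eq_norm_sq]
    ring
  have hNmono : Monotone N := by
    intro i j hij
    have := sq_nonneg ‖f j - f i‖
    rw [hdiff i j hij] at this
    linarith
  have hnorm : ∀ i, ‖f i‖ ≤ r := by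
    intro i
    rw [hf]
    simp only []
    rw [Lp.norm_toLp]
    have h := eLpNorm_le_of_ae_bound (μ := P) (p := 2) (hbound i)
    have h2 : eLpNorm (X i) 2 P ≤ ENNReal.ofReal r := by
      simpa [measure_univ] using h
    calc (eLpNorm (X i) 2 P).toReal ≤ (ENNReal.ofReal r).toReal :=
          ENNReal.toReal_mono ENNReal.ofReal_ne_top h2
      _ = r := ENNReal.toReal_ofReal hr.le
  have hNbdd : BddAbove (Set.range N) := by
    refine ⟨r ^ 2, ?_⟩
    rintro _ ⟨i, rfl⟩
    have := hnorm i
    have h0 := norm_nonneg (f i)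
    simp only [hN]
    nlinarith
  set S : ℝ := ⨆ i, N i with hS
  -- Cauchy
  have hcauchy : Cauchy (Filter.map f atTop) := by
    rw [Metric.cauchy_iff]
    refine ⟨Filter.NeBot.map ‹_› f, fun ε hε => ?_⟩
    have hε4 : 0 < ε ^ 2 / 4 := by positivity
    have hlt : S - ε ^ 2 / 4 < S := by linarith
    obtain ⟨i₀, hi₀⟩ := exists_lt_of_lt_ciSup (hlt.trans_le le_rfl)
    refine ⟨f '' Set.Ici i₀, Filter.image_mem_map (Filter.mem_atTop i₀), ?_⟩
    rintro _ ⟨j, hj, rfl⟩ _ ⟨k, hk, rfl⟩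
    obtain ⟨l, hjl, hkl⟩ := directed_of (· ≤ ·) j k
    have key : ∀ m, i₀ ≤ m → m ≤ l → ‖f l - f m‖ < ε / 2 := by
      intro m him hml
      have h1 : ‖f l - f m‖ ^ 2 = N l - N m := hdiff m l hml
      have h2 : N l ≤ S := le_ciSup hNbdd l
      have h3 : S - ε ^ 2 / 4 < N m := lt_of_lt_of_le hi₀ (hNmono him)
      have h4 : ‖f l - f m‖ ^ 2 < (ε / 2) ^ 2 := by rw [h1]; nlinarith
      have h5 : (0:ℝ) ≤ ε / 2 := by linarith
      nlinarith [norm_nonneg (f l - f m)]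
    have hdj := key j hj hjl
    have hdk := key k hk hkl
    calc dist (f j) (f k) ≤ dist (f j) (f l) + dist (f l) (f k) := dist_triangle _ _ _
      _ = ‖f l - f j‖ + ‖f l - f k‖ := by rw [dist_eq_norm, dist_eq_norm, norm_sub_rev _ (f l)]
      _ < ε / 2 + ε / 2 := add_lt_add hdj hdk
      _ = ε := by ring
  obtain ⟨g, hg⟩ := CompleteSpace.complete hcauchy
  have htends : Tendsto f atTop (𝓝 g) := hg
  -- the limit function
  set Y : Ω → ℝ := ⇑g with hYdef
  have hYmeas : Measurable Y := (Lp.stronglyMeasurable g).measurable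
  have hYint : Integrable Y P := (Lp.memLp g).integrable one_le_two
  -- bounds via order-closedness of Lp
  have hfpos : ∀ i, (0 : Lp ℝ 2 P) ≤ f i := by
    intro i
    rw [← Lp.coeFn_nonneg]
    filter_upwards [hcoe i, hX0 i] with ω e1 e2
    rw [e1]; exact e2
  set R : Lp ℝ 2 P := (memLp_const r (μ := P)).toLp (fun _ => r) with hR
  have hRcoe : R =ᵐ[P] fun _ => r := MemLp.coeFn_toLp _
  have hfler : ∀ i, f i ≤ R := by
    intro i
    rw [← Lp.coeFn_le]
    filter_upwards [hcoe i, hRcoe, hXr i] with ω e1 e2 e3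
    rw [e1, e2]; exact e3
  have hgpos : (0 : Lp ℝ 2 P) ≤ g := ge_of_tendsto htends (Eventually.of_forall hfpos)
  have hgler : g ≤ R := le_of_tendsto htends (Eventually.of_forall hfler)
  have hY0 : 0 ≤ᵐ[P] Y := (Lp.coeFn_nonneg g).mpr hgpos
  have hYr : Y ≤ᵐ[P] fun _ => r := by
    have := (Lp.coeFn_le g R).mpr hgler
    filter_upwards [this, hRcoe] with ω e1 e2
    rw [← e2]; exact e1
  -- L2 convergence implies convergence of eLpNorms
  have htend0 : Tendsto (fun j => ENNReal.ofReal ‖g - f j‖) atTop (𝓝 0) := by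
    have h1 : Tendsto (fun j => ‖g - f j‖) atTop (𝓝 0) := by
      have := (tendsto_const_nhds (x := g) (f := atTop (α := I))).sub htends
      simpa [Function.comp_def] using (continuous_norm.tendsto _).comp this
    have := (ENNReal.continuous_ofReal.tendsto 0).comp h1
    simpa [Function.comp_def] using this
  -- conditional expectation property
  have hcond : ∀ i, P[Y | F i] =ᵐ[P] X i := by
    intro i
    have hA : eLpNorm ((P[Y | F i]) - X i) 1 P = 0 := by
      have hub : ∀ j, i ≤ j →
          eLpNorm ((P[Y | F i]) - X i) 1 P ≤ ENNReal.ofReal ‖g - f j‖ := by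
        intro j hij
        have e1 : (P[Y | F i]) - X i =ᵐ[P] P[Y - X j | F i] := by
          have := condExp_sub (m := F i) (μ := P) hYint (hint j)
          have h2 : P[Y | F i] - P[X j | F i] =ᵐ[P] (P[Y | F i]) - X i := by
            filter_upwards [hmart i j hij] with ω hω
            simp [hω]
          exact (h2.symm.trans this.symm)
        have e2 : eLpNorm ((P[Y | F i]) - X i) 1 P = eLpNorm (P[Y - X j | F i]) 1 P :=
          eLpNorm_congr_ae e1
        have e3 : eLpNorm (P[Y - X j | F i]) 1 P ≤ eLpNorm (Y - X j) 1 P :=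
          eLpNorm_one_condExp_le_eLpNorm _
        have e4 : eLpNorm (Y - X j) 1 P ≤ eLpNorm (Y - X j) 2 P :=
          eLpNorm_le_eLpNorm_of_exponent_le one_le_two
            ((hYint.sub (hint j)).aestronglyMeasurable)
        have e5 : eLpNorm (Y - X j) 2 P = ENNReal.ofReal ‖g - f j‖ := by
          have hae : Y - X j =ᵐ[P] ⇑(g - f j) := by
            filter_upwards [hcoe j, Lp.coeFn_sub g (f j)] with ω c1 c2
            rw [Pi.sub_apply, c2]
            simp only [Pi.sub_apply]
            rw [c1]
          rw [eLpNorm_congr_ae hae, Lp.norm_def,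
            ENNReal.ofReal_toReal (Lp.eLpNorm_ne_top _)]
        rw [e2]
        exact e3.trans (e4.trans_eq e5)
      have hev : ∀ᶠ j in atTop, eLpNorm ((P[Y | F i]) - X i) 1 P
          ≤ ENNReal.ofReal ‖g - f j‖ :=
        (eventually_ge_atTop i).mono fun j hj => hub j hj
      simpa using ge_of_tendsto htend0 hev
    have hzero : (P[Y | F i]) - X i =ᵐ[P] 0 := by
      have hmeas : AEStronglyMeasurable ((P[Y | F i]) - X i) P :=
        (stronglyMeasurable_condExp.mono (hle i)).aestronglyMeasurable.sub (hXae i)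
      exact (eLpNorm_eq_zero_iff hmeas one_ne_zero).mp hA
    filter_upwards [hzero] with ω hω
    have : (P[Y | F i]) ω - X i ω = 0 := hω
    linarith
  -- uniqueness
  refine ⟨Y, hYmeas, hY0, hYr, hcond, ?_⟩
  intro Y' hY'meas hY'0 hY'r hY'cond
  have hY'int : Integrable Y' P := by
    refine Integrable.mono' (integrable_const r) hY'meas.aestronglyMeasurable ?_
    filter_upwards [hY'0, hY'r] with ω h0 h1
    simp only [Pi.zero_apply] at h0
    rw [Real.norm_eq_abs, abs_le]
    exact ⟨by linarith, h1⟩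
  -- equal set-integrals on the π-system
  set C : Set (Set Ω) := ⋃ i, { s | MeasurableSet[F i] s } with hC
  have hCpi : IsPiSystem C := by
    rintro s hs t ht -
    simp only [hC, Set.mem_iUnion] at hs ht ⊢
    obtain ⟨i, hi⟩ := hs
    obtain ⟨j, hj⟩ := ht
    obtain ⟨k, hik, hjk⟩ := directed_of (· ≤ ·) i j
    exact ⟨k, (hmono hik _ hi).inter (hmono hjk _ hj)⟩
  have hCgen : mΩ = MeasurableSpace.generateFrom C := by
    rw [hC]
    exact hgen.symm.trans (MeasurableSpace.generateFrom_iUnion_measurableSet F).symm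
  have hsetint : ∀ s ∈ C, ∫ ω in s, Y' ω ∂P = ∫ ω in s, Y ω ∂P := by
    rintro s hs
    simp only [hC, Set.mem_iUnion] at hs
    obtain ⟨i, hi⟩ := hs
    have h1 : ∫ ω in s, Y' ω ∂P = ∫ ω in s, X i ω ∂P := by
      rw [← setIntegral_condExp (hle i) hY'int hi]
      exact setIntegral_congr_ae ((hle i) s hi) ((hY'cond i).mono fun ω hω _ => hω)
    have h2 : ∫ ω in s, Y ω ∂P = ∫ ω in s, X i ω ∂P := by
      rw [← setIntegral_condExp (hle i) hYint hi]
      exact setIntegral_congr_ae ((hle i) s hi) ((hcond i).mono fun ω hω _ => hω)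
    rw [h1, h2]
  -- withDensity measures
  set ν : Measure Ω := P.withDensity fun ω => ENNReal.ofReal (Y ω) with hν
  set ν' : Measure Ω := P.withDensity fun ω => ENNReal.ofReal (Y' ω) with hν'
  have hsfin : ∫⁻ ω, ENNReal.ofReal (Y' ω) ∂P ≠ ⊤ := by
    have hb : ∫⁻ ω, ENNReal.ofReal (Y' ω) ∂P ≤ ∫⁻ _, ENNReal.ofReal r ∂P := by
      refine lintegral_mono_ae ?_
      filter_upwards [hY'r] with ω h1
      exact ENNReal.ofReal_le_ofReal h1
    refine ne_of_lt (lt_of_le_of_lt hb ?_)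
    simp [lintegral_const, measure_univ]
  haveI : IsFiniteMeasure ν' := by
    constructor
    rw [hν', withDensity_apply _ MeasurableSet.univ, setLIntegral_univ]
    exact lt_of_le_of_ne le_top hsfin
  have hsets : ∀ s ∈ C, ν' s = ν s := by
    intro s hs
    have hsmeas : MeasurableSet s := by
      simp only [hC, Set.mem_iUnion] at hs
      obtain ⟨i, hi⟩ := hs
      exact (hle i) s hi
    rw [hν, hν', withDensity_apply _ hsmeas, withDensity_apply _ hsmeas]
    have hY'r' : ∫⁻ ω in s, ENNReal.ofReal (Y' ω) ∂P = ENNReal.ofReal (∫ ω in s, Y' ω ∂P) := by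
      rw [ofReal_integral_eq_lintegral_ofReal hY'int.integrableOn
        (ae_restrict_of_ae hY'0)]
    have hYr' : ∫⁻ ω in s, ENNReal.ofReal (Y ω) ∂P = ENNReal.ofReal (∫ ω in s, Y ω ∂P) := by
      rw [ofReal_integral_eq_lintegral_ofReal hYint.integrableOn
        (ae_restrict_of_ae hY0)]
    rw [hY'r', hYr', hsetint s hs]
  have huniv : Set.univ ∈ C := by
    simp only [hC, Set.mem_iUnion]
    exact ⟨Classical.arbitrary I, MeasurableSet.univ⟩
  have hmeq : ν' = ν :=
    ext_of_generate_finite C hCgen hCpi hsets (hsets _ huniv)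
  have haeeq : (fun ω => ENNReal.ofReal (Y' ω)) =ᵐ[P] fun ω => ENNReal.ofReal (Y ω) := by
    refine (withDensity_eq_iff ?_ ?_ hsfin).mp hmeq
    · exact (ENNReal.measurable_ofReal.comp hY'meas).aemeasurable
    · exact (ENNReal.measurable_ofReal.comp hYmeas).aemeasurable
  filter_upwards [haeeq, hY'0, hY0] with ω h1 h2 h3
  have := congrArg ENNReal.toReal h1
  rwa [ENNReal.toReal_ofReal h2, ENNReal.toReal_ofReal h3] at this
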